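/- Let q = p^t with p an odd prime and t ≥ 2, n = q+1, and a = n/2. For each 3 ≤ i ≤ a−1, there exists a memory-two convolutional code over F_q with parameters (n, 2i−3, 4; 2, d_f) whose free distance satisfies d_f ≥ n − 2i. -/

import Mathlib

/-- The convolutional code generated by the polynomial matrix `G`. -/
def convCode {F : Type*} [Field F] {k n : ℕ}
    (G : Matrix (Fin k) (Fin n) (Polynomial F)) : Set (Fin n → Polynomial F) :=
  {v | ∃ u : Fin k → Polynomial F, ∀ j, v j = ∑ i : Fin k, u i * G i j}

/-- A polynomial generator matrix is basic if it has a polynomial right inverse. -/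
def isBasic {F : Type*} [Field F] {k n : ℕ}
    (G : Matrix (Fin k) (Fin n) (Polynomial F)) : Prop :=
  ∃ R : Matrix (Fin n) (Fin k) (Polynomial F), G * R = 1

/-- The `i`-th constraint length: the maximal degree in row `i`. -/
def rowDegree {F : Type*} [Field F] {k n : ℕ}
    (G : Matrix (Fin k) (Fin n) (Polynomial F)) (i : Fin k) : ℕ :=
  Finset.univ.sup fun j => (G i j).natDegree

/-- The degree (overall constraint length) `γ = ∑ γ_i` of a generator matrix. -/
def convDegree {F : Type*} [Field F] {k n : ℕ}
    (G : Matrix (Fin k) (Fin n) (Polynomial F)) : ℕ :=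
  ∑ i : Fin k, rowDegree G i

/-- The memory `m = max γ_i` of a generator matrix. -/
def convMemory {F : Type*} [Field F] {k n : ℕ}
    (G : Matrix (Fin k) (Fin n) (Polynomial F)) : ℕ :=
  Finset.univ.sup fun i => rowDegree G i

/-- A basic generator matrix is reduced if its overall constraint length is minimal
among all basic generator matrices of the same code. -/
def isReduced {F : Type*} [Field F] {k n : ℕ}
    (G : Matrix (Fin k) (Fin n) (Polynomial F)) : Prop :=
  isBasic G ∧ ∀ G' : Matrix (Fin k) (Fin n) (Polynomial F),
    isBasic G' → convCode G' = convCode G → convDegree G ≤ convDegree G'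

/-- The weight of `v(D) ∈ F[D]^n`: the total number of nonzero coefficients. -/
def polyWeight {F : Type*} [Field F] [DecidableEq F] {n : ℕ}
    (v : Fin n → Polynomial F) : ℕ :=
  ∑ j : Fin n, (v j).support.card

open Polynomial Finset

open Polynomial Finset

section Aux
variable {F : Type*} [Field F] [DecidableEq F]

/-- evaluation "matrix" entries: row r = (x_0^r, ..., x_{q-1}^r, [r = K-1]) -/
def wfun (qq K : ℕ) (x : Fin qq → F) (r : ℕ) (j : Fin (qq + 1)) : F :=
  if h : (j : ℕ) < qq then (x ⟨j, h⟩) ^ r else if r = K - 1 then 1 else 0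

lemma zeros_le {qq K : ℕ} (hqq : 0 < qq) (hK : 2 ≤ K) (x : Fin qq → F)
    (hx : Function.Injective x) (c : ℕ → F) (hc : ∃ s, s < K ∧ c s ≠ 0) :
    (Finset.univ.filter fun j : Fin (qq + 1) =>
      (∑ s ∈ Finset.range K, c s * wfun qq K x s j) = 0).card ≤ K - 1 := by
  classical
  set f : Polynomial F := ∑ s ∈ Finset.range K, C (c s) * X ^ s with hf
  have hcoeff : ∀ m, f.coeff m = if m < K then c m else 0 := by
    intro m
    rw [hf, finset_sum_coeff]
    simp only [coeff_C_mul, coeff_X_pow, mul_ite, mul_one, mul_zero]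
    rw [Finset.sum_ite_eq (Finset.range K) m c]
    simp [Finset.mem_range]
  have hf0 : f ≠ 0 := by
    obtain ⟨s, hs, hcs⟩ := hc
    intro h
    have := hcoeff s
    rw [h] at this
    simp [hs] at this
    exact hcs this.symm
  have heval : ∀ z : F, f.eval z = ∑ s ∈ Finset.range K, c s * z ^ s := by
    intro z; rw [hf]; simp [eval_finset_sum]
  set Z := (Finset.univ.filter fun j : Fin (qq + 1) =>
      (∑ s ∈ Finset.range K, c s * wfun qq K x s j) = 0) with hZ
  set Zf := Z.filter (fun j : Fin (qq + 1) => (j : ℕ) < qq) with hZf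
  -- value at a finite point
  have hvalfin : ∀ j : Fin (qq + 1), ∀ h : (j : ℕ) < qq,
      (∑ s ∈ Finset.range K, c s * wfun qq K x s j) = f.eval (x ⟨j, h⟩) := by
    intro j h
    rw [heval]
    refine Finset.sum_congr rfl fun s _ => ?_
    simp [wfun, h]
  have hvaltop : ∀ j : Fin (qq + 1), ¬ ((j : ℕ) < qq) →
      (∑ s ∈ Finset.range K, c s * wfun qq K x s j) = c (K - 1) := by
    intro j h
    have : ∀ s ∈ Finset.range K, c s * wfun qq K x s j
        = if s = K - 1 then c s else 0 := by
      intro s _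
      simp only [wfun, dif_neg h]
      split <;> simp
    rw [Finset.sum_congr rfl this, Finset.sum_ite_eq' (Finset.range K) (K-1) c]
    have : K - 1 ∈ Finset.range K := by
      simp [Finset.mem_range]; omega
    simp [this]
  -- finite-part zeros inject into roots
  have hZf_card : Zf.card ≤ f.natDegree := by
    have hmap : ∀ j ∈ Zf, (fun j : Fin (qq+1) => x ⟨(j : ℕ) % qq, Nat.mod_lt _ hqq⟩) j
        ∈ f.roots.toFinset := by
      intro j hj
      rw [hZf, Finset.mem_filter] at hj
      obtain ⟨hjZ, hjlt⟩ := hj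
      rw [hZ, Finset.mem_filter] at hjZ
      have hz := hjZ.2
      simp only []
      rw [show (⟨(j:ℕ) % qq, Nat.mod_lt _ hqq⟩ : Fin qq) = ⟨(j:ℕ), hjlt⟩ from
          Fin.ext (Nat.mod_eq_of_lt hjlt)]
      rw [Multiset.mem_toFinset, mem_roots hf0]
      exact (hvalfin j hjlt).symm.trans hz
    have hinj : Set.InjOn (fun j : Fin (qq+1) => x ⟨(j : ℕ) % qq, Nat.mod_lt _ hqq⟩) Zf := by
      intro j1 h1 j2 h2 he
      rw [Finset.mem_coe, Finset.mem_filter] at h1 h2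
      have e1 : ((j1 : ℕ) % qq) = (j1 : ℕ) := Nat.mod_eq_of_lt h1.2
      have e2 : ((j2 : ℕ) % qq) = (j2 : ℕ) := Nat.mod_eq_of_lt h2.2
      have := hx he
      have : ((j1 : ℕ) % qq) = ((j2 : ℕ) % qq) := congrArg Fin.val this
      apply Fin.ext; omega
    calc Zf.card ≤ f.roots.toFinset.card := Finset.card_le_card_of_injOn _ hmap hinj
      _ ≤ Multiset.card f.roots := f.roots.toFinset_card_le
      _ ≤ f.natDegree := f.card_roots'
  by_cases htop : c (K - 1) = 0
  · -- degree ≤ K - 2, plus possibly the point at infinity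
    have hdeg : f.natDegree ≤ K - 2 := by
      rw [hf]
      apply Polynomial.natDegree_sum_le_of_forall_le
      intro s hs
      rcases eq_or_ne s (K - 1) with rfl | hne
      · simp [htop]
      · have : s ≤ K - 2 := by rw [Finset.mem_range] at hs; omega
        exact (natDegree_C_mul_X_pow_le _ _).trans this
    have hsub : Z ⊆ Zf ∪ {Fin.last qq} := by
      intro j hj
      by_cases hjl : (j : ℕ) < qq
      · exact Finset.mem_union_left _ (by rw [hZf, Finset.mem_filter]; exact ⟨hj, hjl⟩)
      · have : j = Fin.last qq := by
          apply Fin.ext; simp [Fin.last]; omega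
        exact Finset.mem_union_right _ (by simp [this])
    calc Z.card ≤ (Zf ∪ {Fin.last qq}).card := Finset.card_le_card hsub
      _ ≤ Zf.card + 1 := Finset.card_union_le _ _
      _ ≤ (K - 2) + 1 := by omega
      _ ≤ K - 1 := by omega
  · -- top coefficient nonzero: infinity is not a zero, degree ≤ K - 1
    have hdeg : f.natDegree ≤ K - 1 := by
      rw [hf]
      apply Polynomial.natDegree_sum_le_of_forall_le
      intro s hs
      have : s ≤ K - 1 := by rw [Finset.mem_range] at hs; omega
      exact (natDegree_C_mul_X_pow_le _ _).trans this
    have hsub : Z ⊆ Zf := by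
      intro j hj
      by_cases hjl : (j : ℕ) < qq
      · rw [hZf, Finset.mem_filter]; exact ⟨hj, hjl⟩
      · exfalso
        rw [hZ, Finset.mem_filter] at hj
        rw [hvaltop j hjl] at hj
        exact htop hj.2
    calc Z.card ≤ Zf.card := Finset.card_le_card hsub
      _ ≤ f.natDegree := hZf_card
      _ ≤ K - 1 := hdeg

end Aux

section Aux2
variable {F : Type*} [Field F] [DecidableEq F]

lemma filter_lt_two {k : ℕ} (hk : 2 ≤ k) :
    (Finset.univ.filter fun r : Fin k => (r : ℕ) < 2)
      = {(⟨0, by omega⟩ : Fin k), ⟨1, by omega⟩} := by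
  ext r
  simp only [Finset.mem_filter, Finset.mem_univ, true_and, Finset.mem_insert,
    Finset.mem_singleton]
  constructor
  · intro h
    have : (r : ℕ) = 0 ∨ (r : ℕ) = 1 := by omega
    rcases this with h0 | h1
    · exact Or.inl (Fin.ext h0)
    · exact Or.inr (Fin.ext h1)
  · rintro (rfl | rfl) <;> simp

lemma card_filter_lt_two {k : ℕ} (hk : 2 ≤ k) :
    (Finset.univ.filter fun r : Fin k => (r : ℕ) < 2).card = 2 := by
  rw [filter_lt_two hk]
  rw [Finset.card_insert_of_notMem (by simp [Fin.ext_iff]), Finset.card_singleton]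

/-- bound on the degree of a determinant by row degrees -/
lemma natDegree_det_le {k : ℕ} (N : Matrix (Fin k) (Fin k) (Polynomial F))
    (d : Fin k → ℕ) (h : ∀ r c, (N r c).natDegree ≤ d r) :
    N.det.natDegree ≤ ∑ r, d r := by
  rw [Matrix.det_apply]
  apply Polynomial.natDegree_sum_le_of_forall_le
  intro σ _
  rw [Units.smul_def, zsmul_eq_mul]
  refine le_trans (Polynomial.natDegree_mul_le) ?_
  rw [Polynomial.natDegree_intCast, zero_add]
  refine le_trans (Polynomial.natDegree_prod_le Finset.univ (fun c => N (σ c) c)) ?_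
  rw [← Equiv.sum_comp σ d]
  exact Finset.sum_le_sum fun c _ => h (σ c) c

/-- coefficient of `X^4` in a product of `C f + C g * X^2` factors where `g` is
supported on a two-element set -/
lemma coeff4_prod {k : ℕ} (f g : Fin k → F) (E : Finset (Fin k)) (hE : E.card = 2)
    (hg : ∀ r ∉ E, g r = 0) :
    (∏ r, (C (f r) + C (g r) * X ^ 2)).coeff 4
      = ∏ r, (if r ∈ E then g r else f r) := by
  rw [Finset.prod_add, Polynomial.finset_sum_coeff]
  have hterm : ∀ t ∈ Finset.univ.powerset,
      ((∏ r ∈ t, C (f r)) * ∏ r ∈ Finset.univ \ t, (C (g r) * X ^ 2)).coeff 4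
      = if Finset.univ \ t = E then (∏ r ∈ t, f r) * ∏ r ∈ Finset.univ \ t, g r else 0 := by
    intro t _
    rw [Finset.prod_mul_distrib, Finset.prod_const, ← pow_mul,
      ← map_prod (C : F →+* Polynomial F), ← map_prod (C : F →+* Polynomial F),
      ← mul_assoc, ← Polynomial.C_mul, Polynomial.coeff_C_mul, Polynomial.coeff_X_pow]
    by_cases hsub : Finset.univ \ t ⊆ E
    · by_cases heq : Finset.univ \ t = E
      · rw [heq, hE]
        norm_num
      · have hcard : (Finset.univ \ t).card < 2 := by
          rw [← hE]
          exact Finset.card_lt_card (Finset.ssubset_iff_subset_ne.mpr ⟨hsub, heq⟩)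
        rw [if_neg heq, if_neg (by omega)]
        ring
    · obtain ⟨r, hr, hrE⟩ := Finset.not_subset.mp hsub
      simp [Finset.prod_eq_zero hr (hg r hrE)]
  rw [Finset.sum_congr rfl hterm]
  rw [Finset.sum_eq_single (Finset.univ \ E)]
  · simp only [Finset.sdiff_sdiff_eq_self (Finset.subset_univ E), if_pos]
    have h1 : Finset.univ.filter (· ∈ E) = E := by ext r; simp
    have h2 : Finset.univ.filter (¬ · ∈ E) = Finset.univ \ E := by
      ext r; simp [Finset.mem_sdiff]
    rw [Finset.prod_ite g f, h1, h2, mul_comm]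
  · intro b _ hb
    rw [if_neg]
    intro hbe
    apply hb
    rw [← hbe, Finset.sdiff_sdiff_eq_self (Finset.subset_univ b)]
  · intro h
    exact absurd (Finset.mem_powerset.mpr (Finset.subset_univ _)) h

end Aux2

section Aux3
variable {F : Type*} [Field F] [DecidableEq F]

/-- the generator matrix of our memory-two convolutional code -/
noncomputable def Gmat (qq K k : ℕ) (x : Fin qq → F) : Matrix (Fin k) (Fin (qq + 1)) (Polynomial F) :=
  Matrix.of fun r j => Polynomial.C (wfun qq K x (r : ℕ) j) +
    (if (r : ℕ) < 2 then Polynomial.C (wfun qq K x ((r : ℕ) + k) j) * Polynomial.X ^ 2 else 0)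

/-- A right inverse over the base field for the full `K × (qq+1)` evaluation matrix. -/
lemma exists_rightInv {qq K : ℕ} (hqq : 0 < qq) (hK2 : 2 ≤ K) (hKq : K - 1 < qq + 1)
    (x : Fin qq → F) (hx : Function.Injective x) :
    ∃ R : Matrix (Fin (qq + 1)) (Fin K) F,
      (Matrix.of fun (s : Fin K) (j : Fin (qq + 1)) => wfun qq K x (s : ℕ) j) * R = 1 := by
  classical
  set W : Matrix (Fin K) (Fin (qq + 1)) F :=
    Matrix.of fun (s : Fin K) (j : Fin (qq + 1)) => wfun qq K x (s : ℕ) j with hW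
  have hinj : LinearMap.ker W.vecMulLinear = ⊥ := by
    rw [LinearMap.ker_eq_bot']
    intro c hc
    by_contra hc0
    have hex : ∃ s : Fin K, c s ≠ 0 := by
      by_contra hall
      push_neg at hall
      exact hc0 (funext hall)
    obtain ⟨s0, hs0⟩ := hex
    set cn : ℕ → F := fun s => if hs : s < K then c ⟨s, hs⟩ else 0 with hcn
    have hcex : ∃ s, s < K ∧ cn s ≠ 0 := by
      refine ⟨(s0 : ℕ), s0.isLt, ?_⟩
      rw [hcn]
      simp only [s0.isLt, dif_pos]
      simpa using hs0
    have hallzero : ∀ j : Fin (qq + 1),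
        (∑ s ∈ Finset.range K, cn s * wfun qq K x s j) = 0 := by
      intro j
      have hvm : W.vecMulLinear c j = 0 := by rw [hc]; rfl
      rw [Matrix.vecMulLinear_apply] at hvm
      rw [← hvm]
      rw [Matrix.vecMul, dotProduct]
      rw [← Fin.sum_univ_eq_sum_range (fun s => cn s * wfun qq K x s j) K]
      refine Finset.sum_congr rfl fun s _ => ?_
      rw [hcn]
      simp [hW, Matrix.of_apply]
    have hcard := zeros_le hqq hK2 x hx cn hcex
    have : (Finset.univ.filter fun j : Fin (qq + 1) =>
        (∑ s ∈ Finset.range K, cn s * wfun qq K x s j) = 0) = Finset.univ := by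
      rw [Finset.filter_true_of_mem fun j _ => hallzero j]
    rw [this, Finset.card_univ, Fintype.card_fin] at hcard
    omega
  obtain ⟨g, hg⟩ := LinearMap.exists_leftInverse_of_injective W.vecMulLinear hinj
  refine ⟨Matrix.of fun j s => g (Pi.single j 1) s, ?_⟩
  ext s s'
  rw [Matrix.mul_apply]
  have hrow : (fun j => W s j) = W.vecMulLinear (Pi.single s 1) := by
    funext j
    rw [Matrix.vecMulLinear_apply, Matrix.vecMul, dotProduct]
    rw [Finset.sum_eq_single s]
    · simp
    · intro b _ hb; simp [Pi.single_apply, hb]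
    · intro h; exact absurd (Finset.mem_univ s) h
  have hg1 : g (fun j => W s j) = Pi.single s 1 := by
    rw [hrow]
    have := congrArg (fun (φ : (Fin K → F) →ₗ[F] (Fin K → F)) => φ (Pi.single s 1)) hg
    simpa using this
  have hdecomp : (fun j => W s j)
      = ∑ j : Fin (qq + 1), W s j • (Pi.single j (1 : F) : Fin (qq + 1) → F) := by
    refine (pi_eq_sum_univ _).trans ?_
    refine Finset.sum_congr rfl fun j _ => ?_
    congr 1
    funext m
    rw [Pi.single_apply]
    simp [eq_comm]
  have key : g (fun j => W s j) s' = ∑ j, W s j * g (Pi.single j 1) s' := by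
    conv_lhs => rw [hdecomp]
    rw [map_sum, Finset.sum_apply]
    refine Finset.sum_congr rfl fun j _ => ?_
    rw [map_smul]
    rfl
  have lhs_eq : (∑ j, W s j * Matrix.of (fun j s => g (Pi.single j 1) s) j s')
      = ∑ j, W s j * g (Pi.single j 1) s' := rfl
  rw [lhs_eq, ← key, hg1, Matrix.one_apply, Pi.single_apply]
  simp [eq_comm]

end Aux3

section Aux4
variable {F : Type*} [Field F] [DecidableEq F]

lemma gmat_basic {qq K k : ℕ} (hqq : 0 < qq) (hk : 3 ≤ k) (hK : K = k + 2)
    (hKq : K - 1 < qq + 1) (x : Fin qq → F) (hx : Function.Injective x) :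
    ∃ R : Matrix (Fin (qq + 1)) (Fin k) (Polynomial F), Gmat qq K k x * R = 1 := by
  obtain ⟨R', hR'⟩ := exists_rightInv hqq (by omega) hKq x hx
  have hkK : k ≤ K := by omega
  refine ⟨Matrix.of fun j r => Polynomial.C (R' j (Fin.castLE hkK r)), ?_⟩
  have hWR : ∀ (sn : ℕ) (hs : sn < K) (c : Fin K),
      ∑ j, wfun qq K x sn j * R' j c = (1 : Matrix (Fin K) (Fin K) F) ⟨sn, hs⟩ c := by
    intro sn hs c
    rw [← hR', Matrix.mul_apply]
    rfl
  refine Matrix.ext fun r r' => ?_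
  rw [Matrix.mul_apply]
  simp only [Matrix.of_apply]
  by_cases h2 : (r : ℕ) < 2
  · have hsplit : ∀ j, Gmat qq K k x r j * Polynomial.C (R' j (Fin.castLE hkK r'))
        = Polynomial.C (wfun qq K x (r : ℕ) j * R' j (Fin.castLE hkK r'))
          + Polynomial.C (wfun qq K x ((r : ℕ) + k) j * R' j (Fin.castLE hkK r'))
              * Polynomial.X ^ 2 := by
      intro j
      simp only [Gmat, Matrix.of_apply, if_pos h2, map_mul]
      ring
    rw [Finset.sum_congr rfl fun j _ => hsplit j, Finset.sum_add_distrib,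
      ← map_sum, ← Finset.sum_mul, ← map_sum]
    have e1 : ∑ j, wfun qq K x (r : ℕ) j * R' j (Fin.castLE hkK r')
        = (1 : Matrix (Fin K) (Fin K) F) ⟨(r : ℕ), by omega⟩ (Fin.castLE hkK r') :=
      hWR (r : ℕ) (by omega) (Fin.castLE hkK r')
    have e2 : ∑ j, wfun qq K x ((r : ℕ) + k) j * R' j (Fin.castLE hkK r')
        = (1 : Matrix (Fin K) (Fin K) F) ⟨(r : ℕ) + k, by omega⟩ (Fin.castLE hkK r') :=
      hWR ((r : ℕ) + k) (by omega) (Fin.castLE hkK r')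
    have e2' : (1 : Matrix (Fin K) (Fin K) F) ⟨(r : ℕ) + k, by omega⟩ (Fin.castLE hkK r') = 0 := by
      apply Matrix.one_apply_ne
      intro h
      have := congrArg Fin.val h
      simp only [Fin.castLE] at this
      have : (r' : ℕ) < k := r'.isLt
      omega
    rw [e1, e2, e2', map_zero, zero_mul, add_zero]
    simp [Matrix.one_apply, Fin.ext_iff, apply_ite Polynomial.C]
  · have hsplit : ∀ j, Gmat qq K k x r j * Polynomial.C (R' j (Fin.castLE hkK r'))
        = Polynomial.C (wfun qq K x (r : ℕ) j * R' j (Fin.castLE hkK r')) := by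
      intro j
      simp only [Gmat, Matrix.of_apply, if_neg h2, map_mul]
      ring
    rw [Finset.sum_congr rfl fun j _ => hsplit j, ← map_sum]
    rw [hWR (r : ℕ) (by omega) (Fin.castLE hkK r')]
    simp [Matrix.one_apply, Fin.ext_iff, apply_ite Polynomial.C]

lemma gmat_rowDegree {qq K k : ℕ} (hk : 3 ≤ k)
    (x : Fin qq → F) (hxs : Function.Surjective x) (r : Fin k) :
    rowDegree (Gmat qq K k x) r = if (r : ℕ) < 2 then 2 else 0 := by
  by_cases h2 : (r : ℕ) < 2
  · rw [if_pos h2]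
    apply le_antisymm
    · apply Finset.sup_le
      intro j _
      refine (Polynomial.natDegree_add_le _ _).trans (max_le (by simp) ?_)
      rw [show Nat.decLt (r : ℕ) 2 = isTrue h2 from Subsingleton.elim _ _]
      refine (Polynomial.natDegree_mul_le).trans ?_
      simp
    · obtain ⟨j0, hj0⟩ := hxs 1
      set jj : Fin (qq + 1) := Fin.castSucc j0 with hjj
      have hlt : (jj : ℕ) < qq := j0.isLt
      have hw : ∀ s : ℕ, wfun qq K x s jj = 1 := by
        intro s
        rw [wfun, dif_pos hlt]
        have : (⟨(jj : ℕ), hlt⟩ : Fin qq) = j0 := Fin.ext rfl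
        rw [this, hj0, one_pow]
      have hentry : Gmat qq K k x r jj = Polynomial.X ^ 2 + Polynomial.C 1 := by
        simp only [Gmat, Matrix.of_apply, if_pos h2, hw, map_one]
        ring
      have : (Gmat qq K k x r jj).natDegree = 2 := by
        rw [hentry, Polynomial.natDegree_X_pow_add_C]
      rw [← this]
      unfold rowDegree
      exact Finset.le_sup (f := fun j => (Gmat qq K k x r j).natDegree) (Finset.mem_univ jj)
  · rw [if_neg h2]
    refine Nat.eq_zero_of_le_zero ?_
    unfold rowDegree
    apply Finset.sup_le
    intro j _
    simp [Gmat, if_neg h2, show ¬ (r : ℕ) ≤ 1 by omega]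

lemma gmat_weight {qq K k : ℕ} (hqq : 0 < qq) (hk : 3 ≤ k) (hK : K = k + 2)
    (x : Fin qq → F) (hx : Function.Injective x)
    (v : Fin (qq + 1) → Polynomial F) (hv : v ∈ convCode (Gmat qq K k x)) (hv0 : v ≠ 0) :
    (qq + 1) - (K - 1) ≤ polyWeight v := by
  classical
  subst hK
  obtain ⟨u, hu⟩ := hv
  have hex : ∃ j0 ℓ0, (v j0).coeff ℓ0 ≠ 0 := by
    by_contra h
    push_neg at h
    apply hv0
    funext j
    exact Polynomial.ext fun ℓ0 => by simpa using h j ℓ0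
  obtain ⟨j0, ℓ, hℓ⟩ := hex
  set cc : ℕ → F := fun s =>
    if hs : s < k then (u ⟨s, hs⟩).coeff ℓ
    else if s = k then (if 2 ≤ ℓ then (u ⟨0, by omega⟩).coeff (ℓ - 2) else 0)
    else if s = k + 1 then (if 2 ≤ ℓ then (u ⟨1, by omega⟩).coeff (ℓ - 2) else 0)
    else 0 with hcc
  have hcoeff : ∀ j, (v j).coeff ℓ = ∑ s ∈ Finset.range (k+2), cc s * wfun qq (k+2) x s j := by
    intro j
    rw [hu j, Polynomial.finset_sum_coeff]
    have hterm : ∀ r : Fin k, (u r * Gmat qq (k + 2) k x r j).coeff ℓ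
        = (u r).coeff ℓ * wfun qq (k+2) x (r : ℕ) j
          + (if (r : ℕ) < 2
              then (if 2 ≤ ℓ then (u r).coeff (ℓ - 2) else 0) * wfun qq (k+2) x ((r : ℕ) + k) j
              else 0) := by
      intro r
      by_cases h2 : (r : ℕ) < 2
      · simp only [Gmat, Matrix.of_apply, if_pos h2]
        rw [mul_add, Polynomial.coeff_add, Polynomial.coeff_mul_C, ← mul_assoc,
          Polynomial.coeff_mul_X_pow']
        congr 1
        split <;> simp [Polynomial.coeff_mul_C]
      · simp only [Gmat, Matrix.of_apply, if_neg h2, add_zero]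
        simp [Polynomial.coeff_mul_C]
    rw [Finset.sum_congr rfl fun r _ => hterm r, Finset.sum_add_distrib]
    -- second part of LHS
    rw [← Finset.sum_filter, filter_lt_two (by omega : 2 ≤ k)]
    rw [Finset.sum_insert (by simp [Fin.ext_iff]), Finset.sum_singleton]
    -- RHS
    rw [Finset.sum_range_succ, Finset.sum_range_succ]
    have er : ∑ s ∈ Finset.range k, cc s * wfun qq (k+2) x s j
        = ∑ r : Fin k, (u r).coeff ℓ * wfun qq (k+2) x (r : ℕ) j := by
      rw [← Fin.sum_univ_eq_sum_range (fun s => cc s * wfun qq (k+2) x s j) k]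
      refine Finset.sum_congr rfl fun r _ => ?_
      have : cc (r : ℕ) = (u r).coeff ℓ := by
        rw [hcc]
        simp only [r.isLt, dif_pos, Fin.eta]
      rw [this]
    have ek : cc k = (if 2 ≤ ℓ then (u ⟨0, by omega⟩).coeff (ℓ - 2) else 0) := by
      rw [hcc]; simp
    have ek1 : cc (k + 1) = (if 2 ≤ ℓ then (u ⟨1, by omega⟩).coeff (ℓ - 2) else 0) := by
      rw [hcc]; simp
    rw [er, ek, ek1]
    have h0 : ((⟨0, by omega⟩ : Fin k) : ℕ) + k = k := by simp
    have h1 : ((⟨1, by omega⟩ : Fin k) : ℕ) + k = k + 1 := by simp [Nat.add_comm]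
    rw [h0, h1]
    ring
  have hcex : ∃ s, s < k + 2 ∧ cc s ≠ 0 := by
    by_contra h
    push_neg at h
    apply hℓ
    rw [hcoeff j0]
    apply Finset.sum_eq_zero
    intro s hs
    rw [Finset.mem_range] at hs
    rw [h s hs, zero_mul]
  have hz := zeros_le hqq (by omega) x hx cc hcex
  set N := Finset.univ.filter (fun j : Fin (qq + 1) => ¬ ((v j).coeff ℓ = 0)) with hN
  have hNcard : (qq + 1) - (k + 2 - 1) ≤ N.card := by
    have hfe : Finset.univ.filter (fun j : Fin (qq + 1) => (v j).coeff ℓ = 0)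
        = Finset.univ.filter (fun j : Fin (qq + 1) =>
            (∑ s ∈ Finset.range (k+2), cc s * wfun qq (k+2) x s j) = 0) := by
      apply Finset.filter_congr
      intro j _
      rw [hcoeff j]
    have : N = Finset.univ \ Finset.univ.filter (fun j : Fin (qq + 1) => (v j).coeff ℓ = 0) := by
      rw [hN, Finset.filter_not]
    rw [this, Finset.card_sdiff_of_subset (Finset.filter_subset _ _), hfe, Finset.card_univ,
      Fintype.card_fin]
    omega
  refine le_trans hNcard ?_
  calc N.card = ∑ _j ∈ N, 1 := Finset.card_eq_sum_ones N
    _ ≤ ∑ j ∈ N, (v j).support.card := by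
        refine Finset.sum_le_sum fun j hj => ?_
        rw [hN, Finset.mem_filter] at hj
        refine Finset.card_pos.mpr ⟨ℓ, ?_⟩
        rw [Polynomial.mem_support_iff]
        exact hj.2
    _ ≤ ∑ j : Fin (qq + 1), (v j).support.card :=
        Finset.sum_le_sum_of_subset (Finset.filter_subset _ _)
    _ = polyWeight v := rfl

end Aux4

section Aux5
variable {F : Type*} [Field F] [DecidableEq F]

lemma gmat_minor {qq K k : ℕ} (hk : 3 ≤ k) (hK : K = k + 2)
    (x : Fin qq → F) (y : Fin k → F) (hy : Function.Injective y) (hy0 : ∀ c, y c ≠ 0)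
    (S : Fin k → Fin (qq + 1)) (hSlt : ∀ c, ((S c) : ℕ) < qq)
    (hxy : ∀ c, x ⟨(S c : ℕ), hSlt c⟩ = y c) :
    (((Gmat qq K k x).submatrix id S).det).natDegree = 4 := by
  classical
  haveI : NeZero k := ⟨by omega⟩
  set a : Fin k → Fin k → F := fun r c => (y c) ^ (r : ℕ) with ha
  set b : Fin k → Fin k → F := fun r c =>
    if (r : ℕ) < 2 then (y c) ^ ((r : ℕ) + k) else 0 with hb
  have hM : ∀ r c, (Gmat qq K k x).submatrix id S r c
      = Polynomial.C (a r c) + Polynomial.C (b r c) * Polynomial.X ^ 2 := by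
    intro r c
    have hw : ∀ s : ℕ, wfun qq K x s (S c) = (y c) ^ s := by
      intro s
      rw [wfun, dif_pos (hSlt c), hxy c]
    simp only [Matrix.submatrix_apply, id, Gmat, Matrix.of_apply, hw, ha, hb]
    by_cases h2 : (r : ℕ) < 2
    · rw [if_pos h2, if_pos h2]
    · rw [if_neg h2, if_neg h2, map_zero, zero_mul, add_zero]

  -- the coefficient matrix of `X^4` in the determinant
  set A : Matrix (Fin k) (Fin k) F := Matrix.of fun r c =>
    if (r : ℕ) < 2 then (y c) ^ ((r : ℕ) + k) else (y c) ^ (r : ℕ) with hA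
  have hcoeff4 : (((Gmat qq K k x).submatrix id S).det).coeff 4 = A.det := by
    rw [Matrix.det_apply, Matrix.det_apply, Polynomial.finset_sum_coeff]
    refine Finset.sum_congr rfl fun σ _ => ?_
    rw [Units.smul_def, Units.smul_def, Polynomial.coeff_smul]
    congr 1
    have hE : (Finset.univ.filter fun c : Fin k => ((σ c : Fin k) : ℕ) < 2).card = 2 := by
      have hbij : (Finset.univ.filter fun c : Fin k => ((σ c : Fin k) : ℕ) < 2).card
          = (Finset.univ.filter fun r : Fin k => (r : ℕ) < 2).card := by
        apply Finset.card_bij (fun c _ => σ c)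
        · intro c hc
          rw [Finset.mem_filter] at hc ⊢
          exact ⟨Finset.mem_univ _, hc.2⟩
        · intro c1 h1 c2 h2 h
          exact σ.injective h
        · intro s hs
          rw [Finset.mem_filter] at hs
          exact ⟨σ.symm s, by simp [hs.2]; have := hs.2; omega, by simp⟩
      rw [hbij]
      exact card_filter_lt_two (by omega)
    have := coeff4_prod (fun c => a (σ c) c) (fun c => b (σ c) c)
      (Finset.univ.filter fun c : Fin k => ((σ c : Fin k) : ℕ) < 2) hE
      (fun c hc => by
        rw [Finset.mem_filter, not_and] at hc
        have h2 := hc (Finset.mem_univ c)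
        rw [hb]
        simp only [if_neg h2])
    rw [Finset.prod_congr rfl fun c _ => hM (σ c) c, this]
    refine Finset.prod_congr rfl fun c _ => ?_
    by_cases h2 : ((σ c : Fin k) : ℕ) < 2
    · simp only [Finset.mem_filter, Finset.mem_univ, true_and, h2, if_true, hb, hA,
        Matrix.of_apply, if_pos h2]
    · simp only [Finset.mem_filter, Finset.mem_univ, true_and, h2, if_false, ha, hA,
        Matrix.of_apply, if_neg h2]
  -- A is a row permutation of a scaled Vandermonde matrix
  have hAdet : A.det ≠ 0 := by
    set c2 : Fin k := ⟨2, by omega⟩ with hc2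
    set π : Equiv.Perm (Fin k) := Equiv.subRight c2 with hπ
    set B : Matrix (Fin k) (Fin k) F := Matrix.of fun r c => (y c) ^ ((r : ℕ) + 2) with hB
    have hπval : ∀ s : Fin k, ((π s : Fin k) : ℕ) = if (s : ℕ) < 2 then (s : ℕ) + k - 2
        else (s : ℕ) - 2 := by
      intro s
      have hval : ((π s : Fin k) : ℕ) = ((k - (c2 : ℕ)) + (s : ℕ)) % k := by
        rw [hπ, Equiv.subRight_apply, Fin.sub_def]
      rw [hval]
      have hc2v : (c2 : ℕ) = 2 := rfl
      have hs := s.isLt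
      by_cases h2 : (s : ℕ) < 2
      · rw [if_pos h2, hc2v, Nat.mod_eq_of_lt (by omega)]
        omega
      · rw [if_neg h2, hc2v]
        have h3 : (k - 2) + (s : ℕ) = ((s : ℕ) - 2) + k := by omega
        rw [h3, Nat.add_mod_right, Nat.mod_eq_of_lt (by omega)]
    have hAB : A = B.submatrix π id := by
      apply Matrix.ext
      intro r c
      rw [Matrix.submatrix_apply, hA, hB]
      simp only [Matrix.of_apply, id]
      rw [hπval r]
      by_cases h2 : (r : ℕ) < 2
      · rw [if_pos h2, if_pos h2]
        congr 1
        omega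
      · rw [if_neg h2, if_neg h2]
        congr 1
        have := r.isLt
        omega
    have hBdet : B.det ≠ 0 := by
      have hBe : B = (Matrix.vandermonde y).transpose * Matrix.diagonal (fun c => (y c) ^ 2) := by
        apply Matrix.ext
        intro r c
        rw [Matrix.mul_diagonal, Matrix.transpose_apply, Matrix.vandermonde_apply, hB]
        simp only [Matrix.of_apply]
        rw [pow_add]
      rw [hBe, Matrix.det_mul, Matrix.det_transpose, Matrix.det_diagonal,
        Matrix.det_vandermonde]
      apply mul_ne_zero
      · rw [Finset.prod_ne_zero_iff]
        intro i _
        rw [Finset.prod_ne_zero_iff]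
        intro j hj
        rw [Finset.mem_Ioi] at hj
        exact sub_ne_zero.mpr (fun h => (ne_of_lt hj) (hy h).symm)
      · rw [Finset.prod_ne_zero_iff]
        intro c _
        exact pow_ne_zero _ (hy0 c)
    rw [hAB, Matrix.det_permute]
    apply mul_ne_zero _ hBdet
    rcases Int.units_eq_one_or (Equiv.Perm.sign π) with h | h <;> simp [h]
  -- conclude
  apply le_antisymm
  · have hle := natDegree_det_le ((Gmat qq K k x).submatrix id S)
      (fun r => if (r : ℕ) < 2 then 2 else 0) (fun r c => by
        rw [hM r c]
        show _ ≤ if (r : ℕ) < 2 then 2 else 0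
        by_cases h2 : (r : ℕ) < 2
        · rw [if_pos h2]
          refine (Polynomial.natDegree_add_le _ _).trans (max_le (by simp) ?_)
          refine (Polynomial.natDegree_mul_le).trans ?_
          simp
        · rw [if_neg h2, hb]
          simp only [if_neg h2, map_zero, zero_mul, add_zero]
          simp)
    refine hle.trans ?_
    rw [← Finset.sum_filter, filter_lt_two (by omega : 2 ≤ k),
      Finset.sum_insert (by simp [Fin.ext_iff]), Finset.sum_singleton]
  · apply Polynomial.le_natDegree_of_ne_zero
    rw [hcoeff4]
    exact hAdet

end Aux5

section Aux6
variable {F : Type*} [Field F] [DecidableEq F]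

lemma exists_factor {k n' : ℕ} {G1 G2 : Matrix (Fin k) (Fin n') (Polynomial F)}
    (h : convCode G1 ⊆ convCode G2) :
    ∃ U : Matrix (Fin k) (Fin k) (Polynomial F), G1 = U * G2 := by
  classical
  have hrow : ∀ r : Fin k, (fun j => G1 r j) ∈ convCode G1 := by
    intro r
    refine ⟨fun s => if s = r then 1 else 0, fun j => ?_⟩
    rw [Finset.sum_eq_single r]
    · simp
    · intro b _ hb
      simp [hb]
    · intro hr
      exact absurd (Finset.mem_univ r) hr
  choose U hU using fun r => h (hrow r)
  refine ⟨Matrix.of fun r s => U r s, ?_⟩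
  apply Matrix.ext
  intro r j
  rw [Matrix.mul_apply]
  exact hU r j

lemma det_minor_le_convDegree {k n' : ℕ} (G' : Matrix (Fin k) (Fin n') (Polynomial F))
    (S : Fin k → Fin n') :
    ((G'.submatrix id S).det).natDegree ≤ convDegree G' := by
  refine le_trans (natDegree_det_le _ (fun r => rowDegree G' r) ?_) ?_
  · intro r c
    unfold rowDegree
    exact Finset.le_sup (f := fun j => (G' r j).natDegree) (Finset.mem_univ (S c))
  · unfold convDegree
    exact le_refl _

end Aux6


theorem memory_two_convolutional (p t q n a : ℕ) (hp : p.Prime) (hodd : Odd p)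
    (ht : 2 ≤ t) (hq : q = p ^ t) (hn : n = q + 1) (ha : a = n / 2)
    (i : ℕ) (hi1 : 3 ≤ i) (hi2 : i ≤ a - 1)
    (F : Type*) [Field F] [Fintype F] [DecidableEq F] (hF : Fintype.card F = q) :
    ∃ G : Matrix (Fin (2 * i - 3)) (Fin n) (Polynomial F),
      isReduced G ∧
      convDegree G = 4 ∧
      convMemory G = 2 ∧
      (∀ v ∈ convCode G, v ≠ 0 → n - 2 * i ≤ polyWeight v) := by
  classical
  have hp2 := hp.two_le
  have hpm := Nat.odd_iff.mp hodd
  have hp3 : 3 ≤ p := by omega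
  have hq9 : 9 ≤ q := by
    rw [hq]
    calc 9 = 3 ^ 2 := by norm_num
      _ ≤ p ^ 2 := Nat.pow_le_pow_left hp3 2
      _ ≤ p ^ t := Nat.pow_le_pow_right (by omega) ht
  have hqodd : q % 2 = 1 := by
    rw [hq]
    exact Nat.odd_iff.mp (hodd.pow)
  have h2a : 2 * a = n := by
    rw [ha, hn]
    omega
  have h2i : 2 * i ≤ n - 2 := by omega
  subst hn
  set k := 2 * i - 3 with hk
  set K := 2 * i - 1 with hKdef
  have hk3 : 3 ≤ k := by omega
  have hKk : K = k + 2 := by omega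
  have hKq : K - 1 < q + 1 := by omega
  have hq0 : 0 < q := by omega
  set e := Fintype.equivFinOfCardEq hF with he
  set x : Fin q → F := fun j => e.symm j with hx
  have hxinj : Function.Injective x := e.symm.injective
  have hxsurj : Function.Surjective x := e.symm.surjective
  have hcardunits : Fintype.card Fˣ = q - 1 := by rw [Fintype.card_units, hF]
  have hkq1 : k ≤ q - 1 := by omega
  set eu := Fintype.equivFinOfCardEq hcardunits with heu
  set y : Fin k → F := fun r => ((eu.symm (Fin.castLE hkq1 r)) : Fˣ) with hy
  have hyinj : Function.Injective y := by
    intro r1 r2 h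
    have h1 : eu.symm (Fin.castLE hkq1 r1) = eu.symm (Fin.castLE hkq1 r2) := Units.ext h
    have h2 := eu.symm.injective h1
    exact Fin.castLE_injective _ h2
  have hy0 : ∀ r, y r ≠ 0 := fun r => Units.ne_zero _
  set S : Fin k → Fin (q + 1) := fun r => Fin.castLE (Nat.le_succ q) (e (y r)) with hS
  have hSlt : ∀ r, ((S r) : ℕ) < q := fun r => (e (y r)).isLt
  have hxy : ∀ r, x ⟨(S r : ℕ), hSlt r⟩ = y r := by
    intro r
    rw [hx]
    have h1 : (⟨(S r : ℕ), hSlt r⟩ : Fin q) = e (y r) := Fin.ext rfl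
    rw [h1]
    simp
  have rowdeg := gmat_rowDegree (qq := q) (K := K) hk3 x hxsurj
  have hconvdeg : convDegree (Gmat q K k x) = 4 := by
    unfold convDegree
    rw [Finset.sum_congr rfl fun r _ => rowdeg r]
    rw [← Finset.sum_filter, filter_lt_two (by omega : 2 ≤ k),
      Finset.sum_insert (by simp [Fin.ext_iff]), Finset.sum_singleton]
  have hmem : convMemory (Gmat q K k x) = 2 := by
    unfold convMemory
    have h0 : rowDegree (Gmat q K k x) ⟨0, by omega⟩ = 2 := by
      rw [rowdeg]
      norm_num
    apply le_antisymm
    · apply Finset.sup_le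
      intro r _
      rw [rowdeg r]
      split <;> omega
    · rw [← h0]
      exact Finset.le_sup (f := fun r => rowDegree (Gmat q K k x) r) (Finset.mem_univ _)
  have hbasic : isBasic (Gmat q K k x) := gmat_basic hq0 hk3 hKk hKq x hxinj
  have hminor := gmat_minor hk3 hKk x y hyinj hy0 S hSlt hxy
  refine ⟨Gmat q K k x, ⟨hbasic, ?_⟩, hconvdeg, hmem, ?_⟩
  · intro G' hb' hcode
    obtain ⟨U, hU⟩ := exists_factor (le_of_eq hcode)
    obtain ⟨U', hU'⟩ := exists_factor (le_of_eq hcode.symm)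
    obtain ⟨R, hR⟩ := hbasic
    have hUU : U' * U = 1 := by
      have h1 : Gmat q K k x = (U' * U) * Gmat q K k x := by
        rw [Matrix.mul_assoc, ← hU, ← hU']
      calc U' * U = (U' * U) * (Gmat q K k x * R) := by rw [hR, Matrix.mul_one]
        _ = ((U' * U) * Gmat q K k x) * R := by simp only [Matrix.mul_assoc]
        _ = Gmat q K k x * R := by rw [← h1]
        _ = 1 := hR
    have hdetU : IsUnit U.det := by
      have hdd : U'.det * U.det = 1 := by rw [← Matrix.det_mul, hUU, Matrix.det_one]
      exact IsUnit.of_mul_eq_one _ (by rw [mul_comm] at hdd; exact hdd)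
    obtain ⟨cu, hcu_unit, hcu⟩ := Polynomial.isUnit_iff.mp hdetU
    have hsub : G'.submatrix id S = U * ((Gmat q K k x).submatrix id S) := by
      rw [hU]
      apply Matrix.ext
      intro r c
      rw [Matrix.submatrix_apply, Matrix.mul_apply, Matrix.mul_apply]
      rfl
    have hdeg' : ((G'.submatrix id S).det).natDegree = 4 := by
      rw [hsub, Matrix.det_mul, ← hcu,
        Polynomial.natDegree_C_mul hcu_unit.ne_zero]
      exact hminor
    calc convDegree (Gmat q K k x) = 4 := hconvdeg
      _ = ((G'.submatrix id S).det).natDegree := hdeg'.symm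
      _ ≤ convDegree G' := det_minor_le_convDegree G' S
  · intro v hv hv0
    have hw := gmat_weight hq0 hk3 hKk x hxinj v hv hv0
    omega
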